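/- Let a, b be effects on a finite-dimensional complex Hilbert space. Then a∘b = b∘a if and only if ab = ba, i.e. the sequential product of two effects is symmetric exactly when the effects commute as operators. -/

import Mathlib

open Matrix
open scoped Classical ComplexOrder

/-- The positive square root of a positive semidefinite matrix
(junk value `0` on non-positive-semidefinite matrices). -/
noncomputable def sqrtM {ι : Type*} [Fintype ι] [DecidableEq ι] (a : Matrix ι ι ℂ) :
    Matrix ι ι ℂ :=
  if h : a.PosSemidef then
    (h.1.eigenvectorUnitary : Matrix ι ι ℂ) * diagonal ((↑) ∘ (√·) ∘ h.1.eigenvalues) *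
      (star h.1.eigenvectorUnitary : Matrix ι ι ℂ)
  else 0

/-- The sequential product `a ∘ b = a^{1/2} b a^{1/2}` of effects. -/
noncomputable def seqProd {ι : Type*} [Fintype ι] [DecidableEq ι] (a b : Matrix ι ι ℂ) :
    Matrix ι ι ℂ :=
  sqrtM a * b * sqrtM a

/-- An effect: an operator `a` with `0 ≤ a ≤ I` in the Loewner order. -/
def IsEffect {ι : Type*} [Fintype ι] [DecidableEq ι] (a : Matrix ι ι ℂ) : Prop :=
  a.PosSemidef ∧ (1 - a).PosSemidef

section Aux

variable {ι : Type*} [Fintype ι] [DecidableEq ι]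

open scoped Matrix.Norms.L2Operator in
/-- The C⋆-algebra structure on square complex matrices (L2 operator norm). -/
@[reducible]
noncomputable def matCStar : CStarAlgebra (Matrix ι ι ℂ) := Matrix.instCStarAlgebra

/-- The positive square root of a positive semidefinite matrix. -/
noncomputable def Matrix.PosSemidef.sqrt {a : Matrix ι ι ℂ} (ha : a.PosSemidef) :
    Matrix ι ι ℂ :=
  (ha.1.eigenvectorUnitary : Matrix ι ι ℂ)
    * diagonal ((RCLike.ofReal : ℝ → ℂ) ∘ Real.sqrt ∘ ha.1.eigenvalues)
    * (star ha.1.eigenvectorUnitary : Matrix ι ι ℂ)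

lemma Matrix.PosSemidef.posSemidef_sqrt {a : Matrix ι ι ℂ} (ha : a.PosSemidef) :
    ha.sqrt.PosSemidef := by
  unfold Matrix.PosSemidef.sqrt
  have hd : (diagonal ((RCLike.ofReal : ℝ → ℂ) ∘ Real.sqrt ∘ ha.1.eigenvalues)).PosSemidef := by
    rw [posSemidef_diagonal_iff]
    intro i
    simp only [Function.comp_apply]
    exact RCLike.ofReal_nonneg.mpr (Real.sqrt_nonneg _)
  have := hd.mul_mul_conjTranspose_same (ha.1.eigenvectorUnitary : Matrix ι ι ℂ)
  simpa [Matrix.star_eq_conjTranspose] using this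

lemma Matrix.PosSemidef.sqrt_mul_self {a : Matrix ι ι ℂ} (ha : a.PosSemidef) :
    ha.sqrt * ha.sqrt = a := by
  unfold Matrix.PosSemidef.sqrt
  set U : Matrix ι ι ℂ := (ha.1.eigenvectorUnitary : Matrix ι ι ℂ)
  have hU2 : star U * U = 1 := Unitary.star_mul_self_of_mem ha.1.eigenvectorUnitary.2
  have hs := ha.1.spectral_theorem
  rw [Unitary.conjStarAlgAut_apply] at hs
  have hdd : diagonal ((RCLike.ofReal : ℝ → ℂ) ∘ Real.sqrt ∘ ha.1.eigenvalues)
      * diagonal ((RCLike.ofReal : ℝ → ℂ) ∘ Real.sqrt ∘ ha.1.eigenvalues)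
      = diagonal ((RCLike.ofReal : ℝ → ℂ) ∘ ha.1.eigenvalues) := by
    rw [diagonal_mul_diagonal]
    congr 1
    funext i
    simp only [Function.comp_apply]
    rw [← RCLike.ofReal_mul, Real.mul_self_sqrt (ha.eigenvalues_nonneg i)]
  calc U * diagonal ((RCLike.ofReal : ℝ → ℂ) ∘ Real.sqrt ∘ ha.1.eigenvalues) * star U
        * (U * diagonal ((RCLike.ofReal : ℝ → ℂ) ∘ Real.sqrt ∘ ha.1.eigenvalues) * star U)
      = U * (diagonal ((RCLike.ofReal : ℝ → ℂ) ∘ Real.sqrt ∘ ha.1.eigenvalues)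
        * (star U * U) * diagonal ((RCLike.ofReal : ℝ → ℂ) ∘ Real.sqrt ∘ ha.1.eigenvalues))
        * star U := by noncomm_ring
    _ = a := by rw [hU2, mul_one, hdd]; exact hs.symm

lemma sqrtM_eq {a : Matrix ι ι ℂ} (ha : a.PosSemidef) : sqrtM a = ha.sqrt := dif_pos ha

/-- Every element of the spectrum of a selfadjoint matrix is real. -/
lemma selfAdjoint_spectrum_real {M : Matrix ι ι ℂ} (hM : star M = M) {z : ℂ}
    (hz : z ∈ spectrum ℂ M) : z = (z.re : ℂ) := by
  letI : CStarAlgebra (Matrix ι ι ℂ) := matCStar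
  exact IsSelfAdjoint.mem_spectrum_eq_re (show IsSelfAdjoint M from hM) hz

/-- A normal matrix with real spectrum is selfadjoint. -/
lemma normal_real_spectrum_selfAdjoint {X : Matrix ι ι ℂ} (hn : X * star X = star X * X)
    (hr : ∀ z ∈ spectrum ℂ X, z = (z.re : ℂ)) : star X = X := by
  letI : CStarAlgebra (Matrix ι ι ℂ) := matCStar
  haveI : IsStarNormal X := ⟨hn.symm⟩
  have hres : SpectrumRestricts X Complex.reCLM :=
    .of_rightInvOn Complex.ofReal_re fun z hz => by
      simpa [Complex.coe_algebraMap] using (hr z hz).symm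
  exact QuasispectrumRestricts.isSelfAdjoint X (quasispectrumRestricts_iff_spectrumRestricts.mpr hres)

/-- If a matrix commutes with a real diagonal matrix, it commutes with any function
of that diagonal matrix. -/
lemma diagonal_comm_lift {d : ι → ℝ} (f : ℝ → ℝ) {m : Matrix ι ι ℂ}
    (h : m * diagonal ((RCLike.ofReal : ℝ → ℂ) ∘ d)
        = diagonal ((RCLike.ofReal : ℝ → ℂ) ∘ d) * m) :
    m * diagonal ((RCLike.ofReal : ℝ → ℂ) ∘ f ∘ d)
      = diagonal ((RCLike.ofReal : ℝ → ℂ) ∘ f ∘ d) * m := by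
  ext i j
  have h' : m i j * (RCLike.ofReal (d j) : ℂ) = (RCLike.ofReal (d i) : ℂ) * m i j := by
    have := congrFun (congrFun h i) j
    simpa [mul_diagonal, diagonal_mul] using this
  rw [mul_diagonal, diagonal_mul]
  by_cases hd : d i = d j
  · simp only [Function.comp_apply, hd, mul_comm]
  · have hm : m i j = 0 := by
      have hsub : m i j * ((RCLike.ofReal (d j) : ℂ) - RCLike.ofReal (d i)) = 0 := by
        rw [mul_sub, h']; ring
      rcases mul_eq_zero.mp hsub with h0 | h0
      · exact h0
      · exact absurd (RCLike.ofReal_injective (K := ℂ) (sub_eq_zero.mp h0)).symm hd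
    simp [hm]

set_option maxHeartbeats 1000000 in
/-- A matrix commuting with a positive semidefinite matrix commutes with its square root. -/
lemma sqrt_comm {a b : Matrix ι ι ℂ} (ha : a.PosSemidef) (hab : a * b = b * a) :
    ha.sqrt * b = b * ha.sqrt := by
  have hH := ha.1
  set U : Matrix ι ι ℂ := (hH.eigenvectorUnitary : Matrix ι ι ℂ) with hUdef
  have hU1 : U * star U = 1 := Unitary.mul_star_self_of_mem hH.eigenvectorUnitary.2
  have hU2 : star U * U = 1 := Unitary.star_mul_self_of_mem hH.eigenvectorUnitary.2
  have conj_mul : ∀ x y : Matrix ι ι ℂ,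
      (star U * x * U) * (star U * y * U) = star U * (x * y) * U := by
    intro x y
    calc (star U * x * U) * (star U * y * U)
        = star U * x * (U * star U) * y * U := by noncomm_ring
      _ = star U * (x * y) * U := by rw [hU1]; noncomm_ring
  have conj_mul' : ∀ x y : Matrix ι ι ℂ,
      (U * x * star U) * (U * y * star U) = U * (x * y) * star U := by
    intro x y
    calc (U * x * star U) * (U * y * star U)
        = U * x * (star U * U) * y * star U := by noncomm_ring
      _ = U * (x * y) * star U := by rw [hU2]; noncomm_ring
  have hDa : star U * a * U = diagonal ((RCLike.ofReal : ℝ → ℂ) ∘ hH.eigenvalues) :=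
    (Unitary.conjStarAlgAut_star_apply (S := ℂ) _ _).symm.trans
      hH.conjStarAlgAut_star_eigenvectorUnitary
  have hcomm : (star U * b * U) * diagonal ((RCLike.ofReal : ℝ → ℂ) ∘ hH.eigenvalues)
      = diagonal ((RCLike.ofReal : ℝ → ℂ) ∘ hH.eigenvalues) * (star U * b * U) := by
    rw [← hDa, conj_mul, conj_mul, hab]
  have hcomm' := diagonal_comm_lift Real.sqrt hcomm
  have hsqrt : ha.sqrt
      = U * diagonal ((RCLike.ofReal : ℝ → ℂ) ∘ Real.sqrt ∘ hH.eigenvalues) * star U := rfl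
  have hb' : b = U * (star U * b * U) * star U := by
    calc b = (U * star U) * b * (U * star U) := by rw [hU1]; noncomm_ring
      _ = U * (star U * b * U) * star U := by noncomm_ring
  calc ha.sqrt * b
      = (U * diagonal ((RCLike.ofReal : ℝ → ℂ) ∘ Real.sqrt ∘ hH.eigenvalues) * star U)
        * (U * (star U * b * U) * star U) := by rw [← hsqrt, ← hb']
    _ = U * (diagonal ((RCLike.ofReal : ℝ → ℂ) ∘ Real.sqrt ∘ hH.eigenvalues)
        * (star U * b * U)) * star U := conj_mul' _ _
    _ = U * ((star U * b * U)
        * diagonal ((RCLike.ofReal : ℝ → ℂ) ∘ Real.sqrt ∘ hH.eigenvalues)) * star U := by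
          rw [hcomm']
    _ = (U * (star U * b * U) * star U)
        * (U * diagonal ((RCLike.ofReal : ℝ → ℂ) ∘ Real.sqrt ∘ hH.eigenvalues) * star U) :=
          (conj_mul' _ _).symm
    _ = b * ha.sqrt := by rw [← hsqrt, ← hb']

set_option maxHeartbeats 1000000 in
/-- Core of the hard direction: if `√a b √a = √b a √b` then `a` and `b` commute. -/
lemma core_comm {a b : Matrix ι ι ℂ} (ha : a.PosSemidef) (hb : b.PosSemidef)
    (h : ha.sqrt * b * ha.sqrt = hb.sqrt * a * hb.sqrt) : a * b = b * a := by
  set P := ha.sqrt with hP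
  set Q := hb.sqrt with hQ
  have hPH : Pᴴ = P := ha.posSemidef_sqrt.1
  have hQH : Qᴴ = Q := hb.posSemidef_sqrt.1
  have hPP : P * P = a := ha.sqrt_mul_self
  have hQQ : Q * Q = b := hb.sqrt_mul_self
  have hstar : star (P * Q) = Q * P := by
    simp [Matrix.star_eq_conjTranspose, conjTranspose_mul, hPH, hQH]
  have hnormal : (P * Q) * star (P * Q) = star (P * Q) * (P * Q) := by
    rw [hstar]
    calc P * Q * (Q * P) = P * (Q * Q) * P := by noncomm_ring
      _ = Q * (P * P) * Q := by rw [hQQ, hPP]; exact h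
      _ = Q * P * (P * Q) := by noncomm_ring
  -- the spectrum of `P * Q` is real
  have hPpsd := ha.posSemidef_sqrt
  have hRR : hPpsd.sqrt * hPpsd.sqrt = P := hPpsd.sqrt_mul_self
  have hRH : hPpsd.sqrtᴴ = hPpsd.sqrt := hPpsd.posSemidef_sqrt.1
  have hMsa : star (hPpsd.sqrt * Q * hPpsd.sqrt) = hPpsd.sqrt * Q * hPpsd.sqrt := by
    simp [Matrix.star_eq_conjTranspose, conjTranspose_mul, hRH, hQH, mul_assoc]
  have hspec : spectrum ℂ (P * Q) \ {0}
      = spectrum ℂ (hPpsd.sqrt * Q * hPpsd.sqrt) \ {0} := by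
    have hXeq : P * Q = hPpsd.sqrt * (hPpsd.sqrt * Q) := by rw [← hRR, mul_assoc]
    rw [hXeq]
    exact spectrum.nonzero_mul_comm (𝕜 := ℂ) hPpsd.sqrt (hPpsd.sqrt * Q)
  have hr : ∀ z ∈ spectrum ℂ (P * Q), z = (z.re : ℂ) := by
    intro z hz
    by_cases hz0 : z = 0
    · simp [hz0]
    · have hzM : z ∈ spectrum ℂ (hPpsd.sqrt * Q * hPpsd.sqrt) := by
        have hmem : z ∈ spectrum ℂ (P * Q) \ {0} := ⟨hz, hz0⟩
        rw [hspec] at hmem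
        exact hmem.1
      exact selfAdjoint_spectrum_real hMsa hzM
  have hXsa : star (P * Q) = P * Q := normal_real_spectrum_selfAdjoint hnormal hr
  have hc : Commute P Q := by
    rw [hstar] at hXsa
    exact hXsa.symm
  have h1 : Commute P (Q * Q) := hc.mul_right hc
  have h2 : Commute (P * P) (Q * Q) := h1.mul_left h1
  rw [hPP, hQQ] at h2
  exact h2

end Aux

/-- For effects `a`, `b`: `a∘b = b∘a` if and only if `ab = ba`. -/
theorem stmt_3 {ι : Type*} [Fintype ι] [DecidableEq ι] (a b : Matrix ι ι ℂ)
    (ha : IsEffect a) (hb : IsEffect b) :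
    seqProd a b = seqProd b a ↔ a * b = b * a := by
  constructor
  · intro h
    rw [seqProd, seqProd, sqrtM_eq ha.1, sqrtM_eq hb.1] at h
    exact core_comm ha.1 hb.1 h
  · intro hab
    have hsa : ha.1.sqrt * b = b * ha.1.sqrt := sqrt_comm ha.1 hab
    have hsb : hb.1.sqrt * a = a * hb.1.sqrt := sqrt_comm hb.1 hab.symm
    rw [seqProd, seqProd, sqrtM_eq ha.1, sqrtM_eq hb.1]
    calc ha.1.sqrt * b * ha.1.sqrt = b * (ha.1.sqrt * ha.1.sqrt) := by rw [hsa, mul_assoc]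
      _ = b * a := by rw [ha.1.sqrt_mul_self]
      _ = a * b := hab.symm
      _ = a * (hb.1.sqrt * hb.1.sqrt) := by rw [hb.1.sqrt_mul_self]
      _ = hb.1.sqrt * a * hb.1.sqrt := by rw [← mul_assoc, hsb]
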